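/- arXiv:1708.00392 — 2 statements merged into one kernel-verified Lean document; each statement's English description precedes it below -/
import Mathlib

section
/- Let φ : ℝ → ℂ be measurable with ∫_ℝ (1+x²)|φ(x)|² dx < ∞. Then φ ∈ L¹(ℝ), (𝓕_q φ)(0) = 0, and moreover (𝓕_q φ)(ξ) → 0 as ξ → 0 (so 𝓕_q φ is continuous at ξ = 0 with value 0). -/
noncomputable section

open MeasureTheory Real Filter

def Tc (q ξ : ℝ) : ℂ := (Complex.I * ξ) / (Complex.I * ξ - q)

def Rc (q ξ : ℝ) : ℂ := (q : ℂ) / (Complex.I * ξ - q)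

def jost (q x ξ : ℝ) : ℂ :=
  if 0 < x then Complex.exp (Complex.I * x * ξ)
  else if x < 0 then
    (Tc q ξ)⁻¹ * Complex.exp (Complex.I * x * ξ)
      + Rc q ξ * (Tc q ξ)⁻¹ * Complex.exp (-(Complex.I * x * ξ))
  else 1

def Kker (q x ξ : ℝ) : ℂ :=
  if 0 < ξ then Tc q ξ * jost q x ξ
  else if ξ < 0 then Tc q (-ξ) * jost q (-x) (-ξ)
  else 0

def Fq (q : ℝ) (φ : ℝ → ℂ) (ξ : ℝ) : ℂ :=
  (Real.sqrt (2 * Real.pi))⁻¹ * ∫ x : ℝ, (starRingEnd ℂ) (Kker q x ξ) * φ x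

def FqInv (q : ℝ) (ψ : ℝ → ℂ) (x : ℝ) : ℂ :=
  (Real.sqrt (2 * Real.pi))⁻¹ * ∫ ξ : ℝ, Kker q x ξ * ψ ξ

def Vker (q t x ξ : ℝ) : ℂ :=
  Complex.exp (Complex.I * (Real.pi / 4)) * (Real.sqrt (t / (2 * Real.pi))) *
    Complex.exp (-(Complex.I * t * ((x ^ 2 + ξ ^ 2 : ℝ) : ℂ) / 2)) * Kker q (t * x) ξ

def Vop (q t : ℝ) (ψ : ℝ → ℂ) (x : ℝ) : ℂ := ∫ ξ : ℝ, Vker q t x ξ * ψ ξ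

def VopInv (q t : ℝ) (φ : ℝ → ℂ) (ξ : ℝ) : ℂ :=
  ∫ x : ℝ, (starRingEnd ℂ) (Vker q t x ξ) * φ x

def Fr (y : ℝ) : ℂ :=
  Complex.exp (Complex.I * (Real.pi / 4)) * (Real.sqrt (2 * Real.pi))⁻¹ *
    limUnder Filter.atTop
      (fun M : ℝ => ∫ x in (-M)..(-y), Complex.exp (-(Complex.I * (x ^ 2 : ℝ) / 2)))

def H1norm (g : ℝ → ℂ) : ℝ :=
  Real.sqrt ((∫ x : ℝ, ‖g x‖ ^ 2) + ∫ x : ℝ, ‖deriv g x‖ ^ 2)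

def L2norm (g : ℝ → ℂ) : ℝ := Real.sqrt (∫ x : ℝ, ‖g x‖ ^ 2)

def supNorm (g : ℝ → ℂ) : ℝ := ⨆ x : ℝ, ‖g x‖


lemma den_ne (q ξ : ℝ) (hq : 0 < q) : Complex.I * ξ - q ≠ 0 := by
  intro h
  have := congrArg Complex.re h
  simp at this; linarith

lemma q_le_den (q ξ : ℝ) : q ≤ ‖Complex.I * ξ - q‖ := by
  have h := Complex.abs_re_le_norm (Complex.I * ξ - q)
  simp at h
  linarith [le_abs_self q]

lemma den_pos (q ξ : ℝ) (hq : 0 < q) : 0 < ‖Complex.I * (ξ:ℂ) - q‖ :=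
  lt_of_lt_of_le hq (q_le_den q ξ)

lemma xi_le_den (q ξ : ℝ) : |ξ| ≤ ‖Complex.I * ξ - q‖ := by
  have h := Complex.abs_im_le_norm (Complex.I * ξ - q)
  simpa using h

lemma norm_Tc_le_one (q ξ : ℝ) (hq : 0 < q) : ‖Tc q ξ‖ ≤ 1 := by
  rw [Tc, norm_div, div_le_one (den_pos q ξ hq)]
  simpa using xi_le_den q ξ

lemma norm_Rc_le_one (q ξ : ℝ) (hq : 0 < q) : ‖Rc q ξ‖ ≤ 1 := by
  rw [Rc, norm_div, div_le_one (den_pos q ξ hq)]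
  simpa [abs_of_pos hq] using q_le_den q ξ

lemma norm_Tc_le (q ξ : ℝ) (hq : 0 < q) : ‖Tc q ξ‖ ≤ |ξ| / q := by
  rw [Tc, norm_div]
  have h1 : ‖Complex.I * (ξ:ℂ)‖ = |ξ| := by simp
  rw [h1]
  gcongr
  · exact q_le_den q ξ

lemma one_add_Rc (q ξ : ℝ) (hq : 0 < q) : 1 + Rc q ξ = Tc q ξ := by
  rw [Rc, Tc]
  field_simp [den_ne q ξ hq]
  ring

lemma Tc_ne (q ξ : ℝ) (hq : 0 < q) (hξ : ξ ≠ 0) : Tc q ξ ≠ 0 := by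
  rw [Tc]
  apply div_ne_zero
  · simp [Complex.ext_iff, hξ]
  · exact den_ne q ξ hq

lemma norm_exp_I (x ξ : ℝ) : ‖Complex.exp (Complex.I * x * ξ)‖ = 1 := by
  simp [Complex.norm_exp]

lemma Kker_neg (q x ξ : ℝ) (hξ : ξ < 0) : Kker q x ξ = Kker q (-x) (-ξ) := by
  simp [Kker, hξ, not_lt.2 hξ.le, neg_pos.2 hξ, hξ.ne]

lemma Kker_pos_neg (q x ξ : ℝ) (hq : 0 < q) (hξ : 0 < ξ) (hx : x < 0) :
    Kker q x ξ = Complex.exp (Complex.I * x * ξ)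
      + Rc q ξ * Complex.exp (-(Complex.I * x * ξ)) := by
  have hT := Tc_ne q ξ hq hξ.ne'
  simp only [Kker, if_pos hξ, jost, if_neg (not_lt.2 hx.le), if_pos hx]
  field_simp

lemma norm_Kker_le_two (q : ℝ) (hq : 0 < q) (x ξ : ℝ) : ‖Kker q x ξ‖ ≤ 2 := by
  have key : ∀ y η : ℝ, 0 < η → ‖Kker q y η‖ ≤ 2 := by
    intro y η hη
    rcases lt_trichotomy y 0 with hy | hy | hy
    · rw [Kker_pos_neg q y η hq hη hy]
      calc ‖Complex.exp (Complex.I * y * η) + Rc q η * Complex.exp (-(Complex.I * y * η))‖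
          ≤ ‖Complex.exp (Complex.I * y * η)‖ + ‖Rc q η * Complex.exp (-(Complex.I * y * η))‖ :=
            norm_add_le _ _
        _ ≤ 1 + 1 := by
            have h1 : ‖Complex.exp (-(Complex.I * ↑y * ↑η))‖ = 1 := by
              simp [Complex.norm_exp]
            rw [norm_exp_I, norm_mul, h1, mul_one]
            linarith [norm_Rc_le_one q η hq]
        _ = 2 := by norm_num
    · subst hy
      simp only [Kker, if_pos hη, jost, lt_irrefl, if_neg (lt_irrefl 0), if_false, mul_one]
      linarith [norm_Tc_le_one q η hq]
    · simp only [Kker, if_pos hη, jost, if_pos hy, norm_mul, norm_exp_I, mul_one]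
      linarith [norm_Tc_le_one q η hq]
  rcases lt_trichotomy ξ 0 with hξ | hξ | hξ
  · rw [Kker_neg q x ξ hξ]; exact key (-x) (-ξ) (neg_pos.2 hξ)
  · subst hξ; simp [Kker]
  · exact key x ξ hξ

lemma norm_Kker_le_small (q : ℝ) (hq : 0 < q) (x ξ : ℝ) (hs : 2 * |x| * |ξ| ≤ 1) :
    ‖Kker q x ξ‖ ≤ (4 * |x| + q⁻¹) * |ξ| := by
  have key : ∀ y η : ℝ, 0 < η → 2 * |y| * |η| ≤ 1 → ‖Kker q y η‖ ≤ (4 * |y| + q⁻¹) * |η| := by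
    intro y η hη hs
    have hTη : ‖Tc q η‖ ≤ q⁻¹ * |η| := by
      have := norm_Tc_le q η hq
      rw [div_eq_inv_mul] at this
      linarith
    rcases lt_trichotomy y 0 with hy | hy | hy
    · rw [Kker_pos_neg q y η hq hη hy]
      set z : ℂ := Complex.I * y * η with hz
      have hsplit : Complex.exp z + Rc q η * Complex.exp (-z)
          = Complex.exp (-z) * (Complex.exp (2 * z) - 1) + Tc q η * Complex.exp (-z) := by
        rw [← one_add_Rc q η hq]
        have h2 : Complex.exp (-z) * Complex.exp (2 * z) = Complex.exp z := by
          rw [← Complex.exp_add]; congr 1; ring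
        linear_combination -h2
      rw [hsplit]
      have habs2z : ‖2 * z‖ = 2 * |y| * |η| := by
        simp [hz, map_mul, abs_mul, Complex.norm_real]
        ring
      have hexp2 : ‖Complex.exp (2 * z) - 1‖ ≤ 2 * (2 * |y| * |η|) := by
        have := Complex.norm_exp_sub_one_le (x := 2 * z) (by rw [habs2z]; exact hs)
        rwa [habs2z] at this
      have hnegz : ‖Complex.exp (-z)‖ = 1 := by simp [hz, Complex.norm_exp]
      calc ‖Complex.exp (-z) * (Complex.exp (2 * z) - 1) + Tc q η * Complex.exp (-z)‖
          ≤ ‖Complex.exp (-z) * (Complex.exp (2 * z) - 1)‖ + ‖Tc q η * Complex.exp (-z)‖ :=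
            norm_add_le _ _
        _ ≤ 2 * (2 * |y| * |η|) + q⁻¹ * |η| := by
            rw [norm_mul, norm_mul, hnegz, one_mul, mul_one]
            exact add_le_add hexp2 hTη
        _ ≤ (4 * |y| + q⁻¹) * |η| := by ring_nf; nlinarith [abs_nonneg y, abs_nonneg η]
    · subst hy
      simp only [Kker, if_pos hη, jost, lt_irrefl, if_neg (lt_irrefl 0), if_false, mul_one]
      calc ‖Tc q η‖ ≤ q⁻¹ * |η| := hTη
        _ ≤ (4 * |(0:ℝ)| + q⁻¹) * |η| := by
            simp
    · simp only [Kker, if_pos hη, jost, if_pos hy, norm_mul, norm_exp_I, mul_one]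
      calc ‖Tc q η‖ ≤ q⁻¹ * |η| := hTη
        _ ≤ (4 * |y| + q⁻¹) * |η| := by
            have : (0:ℝ) ≤ 4 * |y| := by positivity
            nlinarith [abs_nonneg η]
  rcases lt_trichotomy ξ 0 with hξ | hξ | hξ
  · rw [Kker_neg q x ξ hξ]
    have := key (-x) (-ξ) (neg_pos.2 hξ) (by simpa using hs)
    simpa using this
  · subst hξ; simp [Kker]
  · exact key x ξ hξ hs

lemma meas_jost (q ξ : ℝ) : Measurable (fun x => jost q x ξ) := by
  unfold jost
  apply Measurable.ite (measurableSet_lt measurable_const measurable_id)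
  · exact (Complex.continuous_exp.comp (by fun_prop)).measurable
  · apply Measurable.ite (measurableSet_lt measurable_id measurable_const)
    · apply Measurable.add
      · exact ((Complex.continuous_exp.comp (by fun_prop)).measurable).const_mul _
      · exact ((Complex.continuous_exp.comp (by fun_prop)).measurable).const_mul _
    · exact measurable_const

lemma meas_Kker (q ξ : ℝ) : Measurable (fun x => Kker q x ξ) := by
  unfold Kker
  rcases lt_trichotomy ξ 0 with h | h | h
  · simp only [if_neg (not_lt.2 h.le), if_pos h]
    exact ((meas_jost q (-ξ)).comp measurable_neg).const_mul _
  · simp [h]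
  · simp only [if_pos h]
    exact (meas_jost q ξ).const_mul _

lemma tendsto_Kker (q : ℝ) (hq : 0 < q) (x : ℝ) :
    Tendsto (fun ξ => Kker q x ξ) (nhds 0) (nhds 0) := by
  refine squeeze_zero_norm' (a := fun ξ => (4 * |x| + q⁻¹) * |ξ|) ?_ ?_
  · have hev : ∀ᶠ ξ in nhds (0:ℝ), |ξ| < (2 * |x| + 1)⁻¹ := by
      have : Set.Ioo (-(2 * |x| + 1)⁻¹) ((2 * |x| + 1)⁻¹) ∈ nhds (0:ℝ) := by
        exact Ioo_mem_nhds (neg_lt_zero.2 (by positivity)) (by positivity)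
      filter_upwards [this] with ξ hξ
      rw [abs_lt]; exact ⟨hξ.1, hξ.2⟩
    filter_upwards [hev] with ξ hξ
    apply norm_Kker_le_small q hq
    have h1 : (0:ℝ) < 2 * |x| + 1 := by positivity
    have h2 : |ξ| * (2 * |x| + 1) ≤ 1 := by
      rw [← le_div_iff₀ h1] at *
      calc |ξ| ≤ (2 * |x| + 1)⁻¹ := hξ.le
        _ = 1 / (2 * |x| + 1) := by rw [one_div]
    nlinarith [abs_nonneg ξ, abs_nonneg x]
  · have : Tendsto (fun ξ : ℝ => (4 * |x| + q⁻¹) * |ξ|) (nhds 0)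
        (nhds ((4 * |x| + q⁻¹) * |0|)) := by
      exact (continuous_const.mul continuous_abs).tendsto 0
    simpa using this


theorem stmt2 (q : ℝ) (hq : 0 < q) (φ : ℝ → ℂ) (hmeas : Measurable φ)
    (hφ : Integrable (fun x : ℝ => (1 + x ^ 2) * ‖φ x‖ ^ 2)) :
    Integrable φ ∧ Fq q φ 0 = 0 ∧ Filter.Tendsto (Fq q φ) (nhds 0) (nhds 0) := by
  have hint : Integrable φ := by
    have hbnd : Integrable (fun x : ℝ => ((1 + x ^ 2) * ‖φ x‖ ^ 2 + (1 + x ^ 2)⁻¹) / 2) :=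
      (hφ.add integrable_inv_one_add_sq).div_const 2
    apply Integrable.mono' hbnd hmeas.aestronglyMeasurable
    filter_upwards with x
    have h1 : (0:ℝ) < 1 + x ^ 2 := by positivity
    have h2 : (1 + x ^ 2) * (1 + x ^ 2)⁻¹ = 1 := mul_inv_cancel₀ h1.ne'
    nlinarith [sq_nonneg ((1 + x ^ 2) * ‖φ x‖ - 1), norm_nonneg (φ x), sq_nonneg x]
  refine ⟨hint, ?_, ?_⟩
  · simp [Fq, Kker]
  · have hF : Tendsto (fun ξ => ∫ x : ℝ, (starRingEnd ℂ) (Kker q x ξ) * φ x) (nhds 0)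
        (nhds (∫ x : ℝ, (0:ℂ))) := by
      apply tendsto_integral_filter_of_dominated_convergence (fun x => 2 * ‖φ x‖)
      · filter_upwards with ξ
        have hc : Measurable fun x => (starRingEnd ℂ) (Kker q x ξ) := by
          simp only [starRingEnd_apply]
          exact continuous_star.measurable.comp (meas_Kker q ξ)
        exact (hc.mul hmeas).aestronglyMeasurable
      · filter_upwards with ξ
        filter_upwards with x
        rw [norm_mul, RingHomIsometric.norm_map]
        exact mul_le_mul_of_nonneg_right (norm_Kker_le_two q hq x ξ) (norm_nonneg _)
      · exact hint.norm.const_mul 2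
      · filter_upwards with x
        have h1 : Tendsto (fun ξ => (starRingEnd ℂ) (Kker q x ξ)) (nhds 0) (nhds 0) := by
          have hc := (continuous_star.tendsto (0:ℂ)).comp (tendsto_Kker q hq x)
          rw [show (star (0:ℂ)) = 0 from star_zero ℂ] at hc
          exact hc
        simpa using h1.mul_const (φ x)
    rw [show (Fq q φ) = fun ξ => (Real.sqrt (2 * Real.pi))⁻¹ *
        ∫ x : ℝ, (starRingEnd ℂ) (Kker q x ξ) * φ x from rfl]
    have := hF.const_mul ((Real.sqrt (2 * Real.pi))⁻¹ : ℂ)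
    simpa using this
end
end

section
/- For every y ≥ 0, the limit Fr(y) = e^{iπ/4} (2π)^{-1/2} lim_{M→∞} ∫_{-M}^{-y} e^{-ix²/2} dx exists, and there is a constant C > 0 (independent of y) such that |Fr(y)| ≤ C (1 + y²)^{-1/2} for all y > 0. -/
noncomputable section

open MeasureTheory Real Filter

namespace Stmt7Aux

def g (x : ℝ) : ℂ := Complex.exp (-(Complex.I * (x ^ 2 : ℝ) / 2))

lemma norm_g (x : ℝ) : ‖g x‖ = 1 := by
  simp [g, Complex.norm_exp]; norm_cast

lemma cont_g : Continuous g := by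
  unfold g; continuity

lemma abs_g (x : ℝ) : ‖g x‖ = 1 := norm_g x

lemma hasDerivAt_g (x : ℝ) : HasDerivAt g (-(Complex.I * x) * g x) x := by
  have h2 : HasDerivAt (fun w : ℂ => -(Complex.I * w^2 / 2)) (-(Complex.I * (x:ℂ))) (x:ℂ) := by
    have := (((hasDerivAt_pow 2 (x:ℂ)).const_mul Complex.I).div_const 2).neg
    refine this.congr_deriv ?_
    push_cast; ring
  have h3 := (h2.cexp).comp_ofReal
  have hgeq : g = fun x : ℝ => Complex.exp (-(Complex.I * ((x:ℂ))^2 / 2)) := by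
    funext x; simp only [g]; norm_cast
  rw [hgeq]
  convert h3 using 1
  simp only [g]; push_cast; ring

def hker (x : ℝ) : ℂ := -Complex.I / (x:ℂ)^2 * g x

lemma norm_hker (x : ℝ) : ‖hker x‖ = (x^2)⁻¹ := by
  have : ‖((x:ℂ))^2‖ = x^2 := by
    rw [norm_pow]; push_cast; simp [Complex.norm_real, abs_mul_abs_self, sq]
  have h2 := norm_g x
  simp only [hker, norm_mul, norm_div, this, h2, mul_one, Complex.norm_I, neg_div]
  simp

lemma ibp {a b : ℝ} (ha : 0 < a) (hab : a ≤ b) :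
    ∫ x in a..b, g x
      = Complex.I/b * g b - Complex.I/a * g a - ∫ x in a..b, hker x := by
  have huIcc : Set.uIcc a b = Set.Icc a b := Set.uIcc_of_le hab
  have hpos : ∀ x ∈ Set.uIcc a b, 0 < x := by
    intro x hx; rw [huIcc] at hx; exact lt_of_lt_of_le ha hx.1
  have hu : ∀ x ∈ Set.uIcc a b,
      HasDerivAt (fun x : ℝ => Complex.I / (x:ℂ)) (-Complex.I / (x:ℂ)^2) x := by
    intro x hx
    have h1 : HasDerivAt (fun w : ℂ => Complex.I / w) (-Complex.I / (x:ℂ)^2) (x:ℂ) := by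
      have hx0 : (x:ℂ) ≠ 0 := by
        exact_mod_cast (hpos x hx).ne'
      have := ((hasDerivAt_id (x:ℂ)).inv hx0).const_mul Complex.I
      exact this.congr_deriv (by simp only [id]; ring)
    exact h1.comp_ofReal
  have hv : ∀ x ∈ Set.uIcc a b, HasDerivAt g (-(Complex.I * x) * g x) x :=
    fun x _ => hasDerivAt_g x
  have hcontu : ContinuousOn (fun x : ℝ => -Complex.I / (x:ℂ)^2) (Set.uIcc a b) := by
    apply ContinuousOn.div continuousOn_const (by fun_prop)
    intro x hx
    have : (x:ℂ) ≠ 0 := by exact_mod_cast (hpos x hx).ne'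
    exact pow_ne_zero 2 this
  have hu' : IntervalIntegrable (fun x : ℝ => -Complex.I / (x:ℂ)^2) volume a b :=
    hcontu.intervalIntegrable
  have hv' : IntervalIntegrable (fun x : ℝ => -(Complex.I * x) * g x) volume a b :=
    (Continuous.intervalIntegrable ((continuous_const.mul Complex.continuous_ofReal).neg.mul cont_g) a b)
  have H := intervalIntegral.integral_mul_deriv_eq_deriv_mul hu hv hu' hv'
  have key : ∀ x ∈ Set.uIcc a b,
      Complex.I / (x:ℂ) * (-(Complex.I * x) * g x) = g x := by
    intro x hx
    have hx0 : (x:ℂ) ≠ 0 := by exact_mod_cast (hpos x hx).ne'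
    field_simp
    rw [Complex.I_sq]; ring
  clear hu'
  have e1 : ∫ x in a..b, g x
      = ∫ x in a..b, Complex.I / (x:ℂ) * (-(Complex.I * x) * g x) :=
    (intervalIntegral.integral_congr (fun x hx => (key x hx).symm))
  rw [e1, H]
  have : (∫ x in a..b, -Complex.I / (x:ℂ)^2 * g x) = ∫ x in a..b, hker x := rfl
  rw [this]

lemma integral_inv_sq {a b : ℝ} (ha : 0 < a) (hab : a ≤ b) :
    ∫ x in a..b, (x^2)⁻¹ = a⁻¹ - b⁻¹ := by
  have hpos : ∀ x ∈ Set.uIcc a b, 0 < x := by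
    rw [Set.uIcc_of_le hab]; intro x hx; exact lt_of_lt_of_le ha hx.1
  have hd : ∀ x ∈ Set.uIcc a b, HasDerivAt (fun x : ℝ => -x⁻¹) ((x^2)⁻¹) x := by
    intro x hx
    have := (hasDerivAt_inv (hpos x hx).ne').neg
    exact this.congr_deriv (neg_neg _)
  have hint : IntervalIntegrable (fun x : ℝ => (x^2)⁻¹) volume a b := by
    apply ContinuousOn.intervalIntegrable
    apply ContinuousOn.inv₀ (by fun_prop)
    intro x hx; exact pow_ne_zero 2 (hpos x hx).ne'
  rw [intervalIntegral.integral_eq_sub_of_hasDerivAt hd hint]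
  ring

lemma tail_bound {a b : ℝ} (ha : 0 < a) (hab : a ≤ b) :
    ‖∫ x in a..b, g x‖ ≤ 2/a := by
  have hb : 0 < b := lt_of_lt_of_le ha hab
  rw [ibp ha hab]
  have h1 : ‖Complex.I/(b:ℂ) * g b‖ = b⁻¹ := by
    simp [norm_div, abs_g, Complex.norm_real, abs_of_pos hb]
  have h2 : ‖Complex.I/(a:ℂ) * g a‖ = a⁻¹ := by
    simp [norm_div, abs_g, Complex.norm_real, abs_of_pos ha]
  have h3 : ‖∫ x in a..b, hker x‖ ≤ a⁻¹ - b⁻¹ := by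
    calc ‖∫ x in a..b, hker x‖ ≤ ∫ x in a..b, ‖hker x‖ :=
          intervalIntegral.norm_integral_le_integral_norm hab
      _ = ∫ x in a..b, (x^2)⁻¹ := by
          apply intervalIntegral.integral_congr; intro x _; exact norm_hker x
      _ = a⁻¹ - b⁻¹ := integral_inv_sq ha hab
  calc ‖Complex.I/(b:ℂ) * g b - Complex.I/(a:ℂ) * g a - ∫ x in a..b, hker x‖
      ≤ ‖Complex.I/(b:ℂ) * g b - Complex.I/(a:ℂ) * g a‖ + ‖∫ x in a..b, hker x‖ :=
        norm_sub_le _ _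
    _ ≤ ‖Complex.I/(b:ℂ) * g b‖ + ‖Complex.I/(a:ℂ) * g a‖ + ‖∫ x in a..b, hker x‖ := by
        gcongr; exact norm_sub_le _ _
    _ ≤ b⁻¹ + a⁻¹ + (a⁻¹ - b⁻¹) := by rw [h1, h2]; gcongr
    _ = 2/a := by ring

lemma hker_integrableOn : IntegrableOn hker (Set.Ioi 1) := by
  have hmeas : AEStronglyMeasurable hker (volume.restrict (Set.Ioi 1)) := by
    apply ContinuousOn.aestronglyMeasurable _ measurableSet_Ioi
    apply ContinuousOn.mul _ cont_g.continuousOn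
    apply ContinuousOn.div continuousOn_const (by fun_prop)
    intro x hx
    have : (x:ℂ) ≠ 0 := by
      exact_mod_cast (lt_trans one_pos (Set.mem_Ioi.mp hx)).ne'
    exact pow_ne_zero 2 this
  have hmaj : IntegrableOn (fun x : ℝ => x ^ (-2 : ℝ)) (Set.Ioi 1) :=
    integrableOn_Ioi_rpow_of_lt (by norm_num) one_pos
  apply hmaj.mono' hmeas
  filter_upwards [ae_restrict_mem measurableSet_Ioi] with x hx
  have hx1 : (1:ℝ) < x := hx
  have hx0 : (0:ℝ) ≤ x := by linarith
  have hrw : x ^ (-2 : ℝ) = (x ^ 2)⁻¹ := by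
    rw [Real.rpow_neg hx0, show ((2:ℝ)) = ((2:ℕ):ℝ) by norm_num, Real.rpow_natCast]
  rw [norm_hker, hrw]

def L1 : ℂ := -Complex.I * g 1 - ∫ x in Set.Ioi (1:ℝ), hker x

lemma tendsto_from_one :
    Tendsto (fun M : ℝ => ∫ x in (1:ℝ)..M, g x) atTop (nhds L1) := by
  have t1 : Tendsto (fun M : ℝ => Complex.I/(M:ℂ) * g M) atTop (nhds 0) := by
    rw [tendsto_zero_iff_norm_tendsto_zero]
    apply squeeze_zero' (Eventually.of_forall (fun M => norm_nonneg _))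
    · filter_upwards [eventually_gt_atTop (0:ℝ)] with M hM
      rw [show ‖Complex.I/(M:ℂ) * g M‖ = M⁻¹ by
        simp [norm_div, abs_g, Complex.norm_real, abs_of_pos hM]]
    · exact tendsto_inv_atTop_zero
  have t2 : Tendsto (fun M : ℝ => ∫ x in (1:ℝ)..M, hker x) atTop
      (nhds (∫ x in Set.Ioi (1:ℝ), hker x)) :=
    intervalIntegral_tendsto_integral_Ioi 1 hker_integrableOn tendsto_id
  have t3 : Tendsto (fun M : ℝ => Complex.I/(M:ℂ) * g M
      - Complex.I/((1:ℝ):ℂ) * g 1 - ∫ x in (1:ℝ)..M, hker x) atTop (nhds L1) := by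
    have h := (t1.sub (tendsto_const_nhds (x := Complex.I/((1:ℝ):ℂ) * g 1))).sub t2
    have heq : (0:ℂ) - Complex.I/((1:ℝ):ℂ) * g 1 - ∫ x in Set.Ioi (1:ℝ), hker x = L1 := by
      simp [L1]
    rwa [heq] at h
  apply t3.congr'
  filter_upwards [eventually_ge_atTop (1:ℝ)] with M hM
  exact (ibp one_pos hM).symm

def Ly (y : ℝ) : ℂ := (∫ x in y..(1:ℝ), g x) + L1

lemma tendsto_from_y (y : ℝ) :
    Tendsto (fun M : ℝ => ∫ x in y..M, g x) atTop (nhds (Ly y)) := by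
  apply (tendsto_const_nhds.add tendsto_from_one).congr'
  filter_upwards [eventually_ge_atTop (1:ℝ)] with M _
  exact intervalIntegral.integral_add_adjacent_intervals
    (cont_g.intervalIntegrable _ _) (cont_g.intervalIntegrable _ _)

lemma g_neg (x : ℝ) : g (-x) = g x := by simp [g]

lemma neg_eq (y M : ℝ) :
    (∫ x in (-M)..(-y), Complex.exp (-(Complex.I * (x ^ 2 : ℝ) / 2)))
      = ∫ x in y..M, g x := by
  have h := intervalIntegral.integral_comp_neg (a := y) (b := M) g
  simp only [g_neg] at h
  exact h.symm

lemma tendsto_stmt (y : ℝ) :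
    Tendsto (fun M : ℝ => ∫ x in (-M)..(-y),
        Complex.exp (-(Complex.I * (x ^ 2 : ℝ) / 2))) atTop (nhds (Ly y)) :=
  (tendsto_from_y y).congr (fun M => (neg_eq y M).symm)

lemma norm_Ly_tail {y : ℝ} (hy : 0 < y) : ‖Ly y‖ ≤ 2/y := by
  apply le_of_tendsto (tendsto_from_y y).norm
  filter_upwards [eventually_ge_atTop y] with M hM
  exact tail_bound hy hM

lemma norm_Ly_three {y : ℝ} (hy0 : 0 < y) (hy1 : y ≤ 1) : ‖Ly y‖ ≤ 3 := by
  have h1 : ‖∫ x in y..(1:ℝ), g x‖ ≤ 1 := by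
    have := intervalIntegral.norm_integral_le_of_norm_le_const
      (C := 1) (a := y) (b := 1) (f := g) (fun x _ => le_of_eq (norm_g x))
    calc ‖∫ x in y..(1:ℝ), g x‖ ≤ 1 * |1 - y| := this
      _ ≤ 1 := by rw [one_mul, abs_of_nonneg (by linarith)]; linarith
  have h2 : ‖L1‖ ≤ 2 := by
    have := norm_Ly_tail one_pos
    simpa [Ly] using this
  calc ‖Ly y‖ ≤ ‖∫ x in y..(1:ℝ), g x‖ + ‖L1‖ := norm_add_le _ _
    _ ≤ 3 := by linarith

lemma Fr_eq (y : ℝ) : Fr y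
    = Complex.exp (Complex.I * (Real.pi / 4)) * (Real.sqrt (2 * Real.pi))⁻¹ * Ly y := by
  unfold Fr
  congr 1
  exact (tendsto_stmt y).limUnder_eq

lemma norm_Fr_le (y : ℝ) : ‖Fr y‖ ≤ ‖Ly y‖ := by
  rw [Fr_eq, norm_mul, norm_mul]
  have h1 : ‖Complex.exp (Complex.I * ((Real.pi : ℂ) / 4))‖ = 1 := by
    rw [Complex.norm_exp]
    norm_num [Complex.mul_re, Complex.div_re]
  have h2 : ‖((((Real.sqrt (2 * Real.pi))⁻¹ : ℝ)) : ℂ)‖ ≤ 1 := by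
    rw [Complex.norm_real, Real.norm_eq_abs, abs_of_nonneg (by positivity)]
    rw [inv_le_one_iff₀]
    right
    rw [show (1:ℝ) = Real.sqrt 1 by simp]
    apply Real.sqrt_le_sqrt
    nlinarith [Real.pi_gt_three]
  rw [h1, one_mul]
  exact mul_le_of_le_one_left (norm_nonneg _) h2

end Stmt7Aux

open Stmt7Aux

theorem stmt7 :
    (∀ y : ℝ, 0 ≤ y → ∃ L : ℂ, Filter.Tendsto
        (fun M : ℝ => ∫ x in (-M)..(-y), Complex.exp (-(Complex.I * (x ^ 2 : ℝ) / 2)))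
        Filter.atTop (nhds L)) ∧
      ∃ C > 0, ∀ y : ℝ, 0 < y → ‖Fr y‖ ≤ C * (Real.sqrt (1 + y ^ 2))⁻¹ := by
  constructor
  · intro y _
    exact ⟨Ly y, tendsto_stmt y⟩
  · refine ⟨5, by norm_num, fun y hy => ?_⟩
    have hs : 0 < Real.sqrt (1 + y ^ 2) := Real.sqrt_pos.mpr (by positivity)
    have hs2 : Real.sqrt (1 + y ^ 2) ^ 2 = 1 + y ^ 2 :=
      Real.sq_sqrt (by positivity)
    rcases le_or_gt y 1 with h1 | h1
    · calc ‖Fr y‖ ≤ ‖Ly y‖ := norm_Fr_le y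
        _ ≤ 3 := norm_Ly_three hy h1
        _ ≤ 5 * (Real.sqrt (1 + y ^ 2))⁻¹ := by
            rw [le_mul_inv_iff₀ hs]
            nlinarith [hs.le]
    · calc ‖Fr y‖ ≤ ‖Ly y‖ := norm_Fr_le y
        _ ≤ 2/y := norm_Ly_tail hy
        _ ≤ 5 * (Real.sqrt (1 + y ^ 2))⁻¹ := by
            rw [show (5:ℝ) * (Real.sqrt (1 + y ^ 2))⁻¹ = 5 / Real.sqrt (1 + y ^ 2) by ring,
              div_le_div_iff₀ hy hs]
            nlinarith [hs.le]
end
end
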